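/- Let n ≥ 1, k ≥ 2 and c be integers, and let f(x) = x(1 − x). Then the number of tuples (x_1,...,x_k) with each x_i an exceptional unit in ℤ_n (i.e., gcd(x_i(1 − x_i), n) = 1) and x_1 + ... + x_k ≡ c (mod n) equals (−1)^{kω(n)} · ∏_{p | n} p^{kν_p(n) − ν_p(n) − k} · ( p · Σ_{0 ≤ j ≤ k, j ≡ c (mod p)} C(k, j) + (2 − p)^k − 2^k ), where the product runs over prime divisors p of n. -/

import Mathlib

open Finset

noncomputable def Ez (N k : ℕ) (c : ZMod N) : ℕ :=
  Nat.card {y : Fin k → ZMod N // (∀ i, IsUnit (y i * (1 - y i))) ∧ ∑ i, y i = c}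

lemma Ez_zero (N : ℕ) (c : ZMod N) : Ez N 0 c = if c = 0 then 1 else 0 := by
  rcases eq_or_ne c 0 with h | h
  · subst h
    simp only [Ez]
    rw [if_pos trivial, Nat.card_eq_one_iff_unique]
    constructor
    · constructor
      intro a b
      ext i
      exact i.elim0
    · exact ⟨⟨fun i => i.elim0, fun i => i.elim0, by simp⟩⟩
  · rw [if_neg h, Ez]
    have : IsEmpty {y : Fin 0 → ZMod N // (∀ i, IsUnit (y i * (1 - y i))) ∧ ∑ i, y i = c} := by
      constructor
      rintro ⟨y, -, hs⟩
      exact h (by simpa using hs.symm)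
    exact Nat.card_of_isEmpty

def consEquiv (N k : ℕ) (c : ZMod N) :
    {y : Fin (k+1) → ZMod N // (∀ i, IsUnit (y i * (1 - y i))) ∧ ∑ i, y i = c} ≃
    Σ a : {a : ZMod N // IsUnit (a * (1 - a))},
      {y : Fin k → ZMod N // (∀ i, IsUnit (y i * (1 - y i))) ∧ ∑ i, y i = c - a.1} where
  toFun y := ⟨⟨y.1 0, y.2.1 0⟩, ⟨Fin.tail y.1, fun i => y.2.1 i.succ, by
    have := y.2.2
    rw [Fin.sum_univ_succ] at this
    simp [Fin.tail, eq_sub_iff_add_eq, add_comm, this]⟩⟩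
  invFun az := ⟨Fin.cons az.1.1 az.2.1, by
    refine ⟨fun i => ?_, ?_⟩
    · refine Fin.cases ?_ ?_ i
      · simpa using az.1.2
      · intro j; simpa using az.2.2.1 j
    · rw [Fin.sum_univ_succ]
      simp [az.2.2.2]⟩
  left_inv y := by
    ext i
    exact congrFun (Fin.cons_self_tail y.1) i
  right_inv az := by
    refine Sigma.ext ?_ ?_
    · simp
    · simp [Fin.tail_cons]
      rfl

lemma nat_card_sigma {ι : Type*} [Fintype ι] (f : ι → Type*) [∀ i, Finite (f i)] :
    Nat.card (Σ i, f i) = ∑ i, Nat.card (f i) := by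
  classical
  haveI : ∀ i, Fintype (f i) := fun i => Fintype.ofFinite _
  simp [Nat.card_eq_fintype_card]

lemma Ez_succ (N k : ℕ) [NeZero N] (c : ZMod N) :
    Ez N (k+1) c = ∑ a : ZMod N, if IsUnit (a * (1 - a)) then Ez N k (c - a) else 0 := by
  classical
  rw [Ez, Nat.card_congr (consEquiv N k c), nat_card_sigma]
  show ∑ a : {a : ZMod N // IsUnit (a * (1 - a))}, Ez N k (c - a.1) = _
  rw [← Finset.sum_subtype (Finset.univ.filter fun a : ZMod N => IsUnit (a * (1 - a)))
      (p := fun a : ZMod N => IsUnit (a * (1 - a))) (by simp) (fun a => Ez N k (c - a))]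
  rw [Finset.sum_filter]

lemma pascal (p : ℕ) (k : ℕ) (c : ZMod p) :
    (∑ j ∈ range (k + 2), if (j : ZMod p) = c then ((k+1).choose j : ℚ) else 0) =
    (∑ j ∈ range (k + 1), if (j : ZMod p) = c then (k.choose j : ℚ) else 0) +
    (∑ j ∈ range (k + 1), if (j : ZMod p) = c - 1 then (k.choose j : ℚ) else 0) := by
  have hcond : ∀ j : ℕ, ((j : ZMod p) + 1 = c) ↔ ((j : ZMod p) = c - 1) := fun j =>
    eq_sub_iff_add_eq.symm
  rw [Finset.sum_range_succ' _ (k+1)]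
  have step : ∀ j ∈ range (k+1),
      (if ((j+1 : ℕ) : ZMod p) = c then (((k+1).choose (j+1) : ℕ) : ℚ) else 0)
      = (if ((j : ℕ) : ZMod p) = c - 1 then (k.choose (j+1) : ℚ) else 0)
        + (if ((j : ℕ) : ZMod p) = c - 1 then (k.choose j : ℚ) else 0) := by
    intro j _
    rw [Nat.choose_succ_succ']
    push_cast
    by_cases h : ((j : ℕ) : ZMod p) = c - 1
    · rw [if_pos ((hcond j).mpr h), if_pos h, if_pos h]; ring
    · rw [if_neg (fun hh => h ((hcond j).mp hh)), if_neg h, if_neg h]; ring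
  rw [Finset.sum_congr rfl step, Finset.sum_add_distrib]
  rw [Finset.sum_range_succ (fun j => if ((j:ℕ):ZMod p) = c - 1 then (k.choose (j+1) : ℚ) else 0) k]
  rw [Nat.choose_succ_self]
  have hrhs : (∑ j ∈ range (k + 1), if (j : ZMod p) = c then (k.choose j : ℚ) else 0)
      = (∑ j ∈ range k, if ((j:ℕ) : ZMod p) = c - 1 then (k.choose (j+1) : ℚ) else 0)
        + (if ((0:ℕ) : ZMod p) = c then (k.choose 0 : ℚ) else 0) := by
    rw [Finset.sum_range_succ' _ k]
    congr 1
    refine Finset.sum_congr rfl fun j _ => ?_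
    push_cast
    by_cases h : ((j : ℕ) : ZMod p) = c - 1
    · rw [if_pos ((hcond j).mpr h), if_pos h]
    · rw [if_neg (fun hh => h ((hcond j).mp hh)), if_neg h]
  rw [hrhs]
  simp only [Nat.choose_zero_right, Nat.cast_zero, Nat.cast_one, ite_self]
  ring

lemma Ez_prime (p : ℕ) (hp : p.Prime) (k : ℕ) (c : ZMod p) :
    (Ez p k c : ℚ) = (((p : ℚ) - 2) ^ k - (-2 : ℚ) ^ k) / p +
      (-1 : ℚ) ^ k * ∑ j ∈ range (k + 1), if (j : ZMod p) = c then (k.choose j : ℚ) else 0 := by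
  haveI : Fact p.Prime := ⟨hp⟩
  induction k generalizing c with
  | zero =>
      rw [Ez_zero]
      simp only [pow_zero, sub_self, zero_div, zero_add, one_mul, range_one, sum_singleton,
        Nat.cast_zero, Nat.choose_self, Nat.cast_one]
      by_cases h : c = 0
      · subst h; simp
      · rw [if_neg h, if_neg (by simpa [eq_comm] using h)]
        simp
  | succ k ih =>
      have hq : (p : ℚ) ≠ 0 := Nat.cast_ne_zero.mpr hp.pos.ne'
      have key : (Ez p (k+1) c : ℚ)
          = (∑ a : ZMod p, (Ez p k (c - a) : ℚ)) - Ez p k (c - 0) - Ez p k (c - 1) := by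
        rw [Ez_succ]
        push_cast
        have hterm : ∀ a : ZMod p, (if IsUnit (a * (1 - a)) then (Ez p k (c - a) : ℚ) else 0)
            = (Ez p k (c - a) : ℚ) - (if a ∈ ({0, 1} : Finset (ZMod p)) then (Ez p k (c - a) : ℚ) else 0) := by
          intro a
          have hiff : IsUnit (a * (1 - a)) ↔ a ∉ ({0, 1} : Finset (ZMod p)) := by
            rw [isUnit_iff_ne_zero, mul_ne_zero_iff, sub_ne_zero]
            simp only [Finset.mem_insert, Finset.mem_singleton, not_or]
            exact and_congr_right fun _ => ne_comm
          by_cases h : a ∈ ({0, 1} : Finset (ZMod p))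
          · rw [if_neg (fun hu => (hiff.mp hu) h), if_pos h]; ring
          · rw [if_pos (hiff.mpr h), if_neg h]; ring
        rw [Finset.sum_congr rfl fun a _ => hterm a, Finset.sum_sub_distrib]
        rw [Finset.sum_ite_mem, Finset.univ_inter, Finset.sum_pair (zero_ne_one' (ZMod p))]
        ring
      have tot : (∑ a : ZMod p, (Ez p k (c - a) : ℚ)) = ∑ b : ZMod p, (Ez p k b : ℚ) :=
        Fintype.sum_equiv (Equiv.subLeft c) _ _ (fun a => rfl)
      have swap : (∑ b : ZMod p, ∑ j ∈ range (k + 1), if (j : ZMod p) = b then (k.choose j : ℚ) else 0)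
          = 2 ^ k := by
        rw [Finset.sum_comm]
        have : ∀ j ∈ range (k + 1),
            (∑ b : ZMod p, if (j : ZMod p) = b then (k.choose j : ℚ) else 0) = (k.choose j : ℚ) :=
          fun j _ => Finset.sum_ite_eq Finset.univ ((j : ZMod p)) _ |>.trans (if_pos (Finset.mem_univ _))
        rw [Finset.sum_congr rfl this]
        rw [← Nat.cast_sum, Nat.sum_range_choose]
        push_cast
        ring
      have totval : (∑ b : ZMod p, (Ez p k b : ℚ)) = ((p : ℚ) - 2) ^ k := by
        have : ∀ b : ZMod p, (Ez p k b : ℚ) = (((p : ℚ) - 2) ^ k - (-2 : ℚ) ^ k) / p +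
            (-1 : ℚ) ^ k * ∑ j ∈ range (k + 1), if (j : ZMod p) = b then (k.choose j : ℚ) else 0 :=
          fun b => ih b
        rw [Finset.sum_congr rfl fun b _ => this b, Finset.sum_add_distrib, Finset.sum_const,
          ← Finset.mul_sum, swap, Finset.card_univ, ZMod.card]
        have h2 : (-2 : ℚ) ^ k = (-1 : ℚ) ^ k * 2 ^ k := by
          rw [← mul_pow]; norm_num
        rw [h2, nsmul_eq_mul]
        field_simp
        ring
      rw [key, tot, totval, sub_zero, ih c, ih (c - 1), pascal p k c]
      have h2 : (-2 : ℚ) ^ (k + 1) = -2 * (-2 : ℚ) ^ k := by ring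
      have h3 : ((p : ℚ) - 2) ^ (k + 1) = ((p : ℚ) - 2) * ((p : ℚ) - 2) ^ k := by ring
      rw [h2, h3]
      field_simp
      ring

noncomputable def D (N m : ℕ) (c : ZMod N) : ℕ :=
  Nat.card {w : Fin m → ZMod N // (∀ i, IsUnit (w i * (1 - w i))) ∧
    IsUnit ((c - ∑ i, w i) * (1 - (c - ∑ i, w i)))}

def snocEquiv (N m : ℕ) (c : ZMod N) :
    {y : Fin (m+1) → ZMod N // (∀ i, IsUnit (y i * (1 - y i))) ∧ ∑ i, y i = c} ≃
    {w : Fin m → ZMod N // (∀ i, IsUnit (w i * (1 - w i))) ∧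
      IsUnit ((c - ∑ i, w i) * (1 - (c - ∑ i, w i)))} where
  toFun y := ⟨Fin.init y.1, fun i => y.2.1 i.castSucc, by
    have hs := y.2.2
    rw [Fin.sum_univ_castSucc] at hs
    have hl : y.1 (Fin.last m) = c - ∑ i : Fin m, Fin.init y.1 i := by
      rw [eq_sub_iff_add_eq, add_comm]
      simpa [Fin.init] using hs
    rw [← hl]
    exact y.2.1 (Fin.last m)⟩
  invFun w := ⟨Fin.snoc w.1 (c - ∑ i, w.1 i), by
    refine ⟨fun i => ?_, ?_⟩
    · refine Fin.lastCases ?_ ?_ i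
      · simpa using w.2.2
      · intro j; simpa using w.2.1 j
    · rw [Fin.sum_univ_castSucc]
      simp⟩
  left_inv y := by
    ext i
    refine Fin.lastCases ?_ ?_ i
    · have hs := y.2.2
      rw [Fin.sum_univ_castSucc] at hs
      simp only [Fin.snoc_last]
      rw [sub_eq_iff_eq_add]
      rw [show (∑ x : Fin m, Fin.init (y.1) x) = ∑ i : Fin m, y.1 i.castSucc from
        Finset.sum_congr rfl fun j _ => rfl]
      rw [add_comm] at hs
      exact hs.symm
    · intro j
      simp [Fin.init]
  right_inv w := by
    ext i
    simp

lemma Ez_eq_D (N m : ℕ) (c : ZMod N) : Ez N (m+1) c = D N m c :=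
  Nat.card_congr (snocEquiv N m c)

lemma card_comp_fiber {α β : Type*} [Finite α] [Fintype β] (r : α → β) (n : ℕ)
    (hfib : ∀ b : β, Nat.card {a : α // r a = b} = n) (m : ℕ) (Q : (Fin m → β) → Prop) :
    Nat.card {w : Fin m → α // Q (r ∘ w)} = n ^ m * Nat.card {v : Fin m → β // Q v} := by
  classical
  haveI : Fintype α := Fintype.ofFinite _
  haveI : Fintype {v : Fin m → β // Q v} := Subtype.fintype _
  have hfw : ∀ v : Fin m → β, Nat.card {w : Fin m → α // r ∘ w = v} = n ^ m := by
    intro v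
    have e2 : {w : Fin m → α // r ∘ w = v} ≃ ∀ j, {a : α // r a = v j} :=
      (Equiv.subtypeEquivRight fun w => by
        simp only [funext_iff, Function.comp_apply]).trans
        (Equiv.subtypePiEquivPi (p := fun j a => r a = v j))
    rw [Nat.card_congr e2, Nat.card_pi]
    rw [Finset.prod_congr rfl fun j _ => hfib (v j), Finset.prod_const, Finset.card_univ,
      Fintype.card_fin]
  have key : ∀ (a b : Σ v : {v : Fin m → β // Q v}, {w : Fin m → α // r ∘ w = v.1}),
      a.2.1 = b.2.1 → a = b := by
    rintro ⟨⟨va, hva⟩, ⟨wa, hwa⟩⟩ ⟨⟨vb, hvb⟩, ⟨wb, hwb⟩⟩ h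
    dsimp only at h hwa hwb
    subst h
    have hv : va = vb := hwa.symm.trans hwb
    subst hv
    rfl
  have e1 : {w : Fin m → α // Q (r ∘ w)} ≃
      Σ v : {v : Fin m → β // Q v}, {w : Fin m → α // r ∘ w = v.1} :=
    { toFun := fun w => ⟨⟨r ∘ w.1, w.2⟩, ⟨w.1, rfl⟩⟩
      invFun := fun x => ⟨x.2.1, by rw [x.2.2]; exact x.1.2⟩
      left_inv := fun w => rfl
      right_inv := fun x => key _ x rfl }
  rw [Nat.card_congr e1, nat_card_sigma]
  rw [Finset.sum_congr rfl fun v _ => hfw v.1, Finset.sum_const, Finset.card_univ, smul_eq_mul,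
    Nat.card_eq_fintype_card, mul_comm]

lemma card_fiber (p e : ℕ) (hp : p.Prime) (he : e ≠ 0) (x : ZMod p) :
    Nat.card {z : ZMod (p ^ e) // ZMod.castHom (dvd_pow_self p he) (ZMod p) z = x}
      = p ^ (e - 1) := by
  haveI : NeZero p := ⟨hp.pos.ne'⟩
  haveI : NeZero (p ^ e) := ⟨pow_ne_zero e hp.pos.ne'⟩
  set red := ZMod.castHom (dvd_pow_self p he) (ZMod p) with hred
  have hsurj : Function.Surjective red := by
    intro b
    obtain ⟨m, rfl⟩ := ZMod.natCast_zmod_surjective b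
    exact ⟨(m : ZMod (p ^ e)), map_natCast red m⟩
  have hfib : ∀ x y : ZMod p,
      Nat.card {z : ZMod (p ^ e) // red z = x} = Nat.card {z : ZMod (p ^ e) // red z = y} := by
    intro x y
    obtain ⟨d, hd⟩ := hsurj (y - x)
    refine Nat.card_congr
      { toFun := fun z => ⟨z.1 + d, by rw [map_add, z.2, hd]; ring⟩
        invFun := fun z => ⟨z.1 - d, by rw [map_sub, z.2, hd]; ring⟩
        left_inv := fun z => by simp
        right_inv := fun z => by simp }
  have hsum : ∑ x : ZMod p, Nat.card {z : ZMod (p ^ e) // red z = x} = p ^ e := by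
    calc ∑ x : ZMod p, Nat.card {z : ZMod (p ^ e) // red z = x}
        = Nat.card (Σ x : ZMod p, {z : ZMod (p ^ e) // red z = x}) := (nat_card_sigma _).symm
      _ = Nat.card (ZMod (p ^ e)) := Nat.card_congr (Equiv.sigmaFiberEquiv red)
      _ = p ^ e := Nat.card_zmod _
  rw [Finset.sum_congr rfl fun b _ => hfib b 0, Finset.sum_const, Finset.card_univ, ZMod.card,
    smul_eq_mul] at hsum
  have hpe : p ^ e = p * p ^ (e - 1) := by
    conv_lhs => rw [show e = (e - 1) + 1 by omega]
    rw [pow_succ]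
    ring
  have h0 : Nat.card {z : ZMod (p ^ e) // red z = 0} = p ^ (e - 1) :=
    Nat.eq_of_mul_eq_mul_left hp.pos (hsum.trans hpe)
  rw [hfib x 0, h0]

lemma isUnit_red_iff (p e : ℕ) (hp : p.Prime) (he : e ≠ 0) (z : ZMod (p ^ e)) :
    IsUnit (ZMod.castHom (dvd_pow_self p he) (ZMod p) z) ↔ IsUnit z := by
  haveI : NeZero p := ⟨hp.pos.ne'⟩
  haveI : NeZero (p ^ e) := ⟨pow_ne_zero e hp.pos.ne'⟩
  set red := ZMod.castHom (dvd_pow_self p he) (ZMod p) with hred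
  have hz : ((z.val : ℕ) : ZMod (p ^ e)) = z := ZMod.natCast_rightInverse z
  conv_rhs => rw [← hz]
  rw [← hz, map_natCast, ZMod.isUnit_iff_coprime, ZMod.isUnit_iff_coprime,
    Nat.coprime_pow_right_iff (Nat.pos_of_ne_zero he)]
  rw [ZMod.val_natCast, Nat.mod_eq_of_lt (ZMod.val_lt z)]

lemma D_lift (p e m : ℕ) (hp : p.Prime) (he : e ≠ 0) (c : ℤ) :
    D (p ^ e) m ((c : ℤ) : ZMod (p ^ e)) = p ^ ((e - 1) * m) * D p m (c : ZMod p) := by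
  haveI : NeZero p := ⟨hp.pos.ne'⟩
  haveI : NeZero (p ^ e) := ⟨pow_ne_zero e hp.pos.ne'⟩
  set red := ZMod.castHom (dvd_pow_self p he) (ZMod p) with hred
  set Q : (Fin m → ZMod p) → Prop := fun v => (∀ i, IsUnit (v i * (1 - v i))) ∧
    IsUnit (((c : ZMod p) - ∑ i, v i) * (1 - ((c : ZMod p) - ∑ i, v i))) with hQ
  have hpred : ∀ w : Fin m → ZMod (p ^ e),
      ((∀ i, IsUnit (w i * (1 - w i))) ∧
        IsUnit (((c : ZMod (p ^ e)) - ∑ i, w i) * (1 - ((c : ZMod (p ^ e)) - ∑ i, w i))))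
      ↔ Q (red ∘ w) := by
    intro w
    have h1 : ∀ i, IsUnit (w i * (1 - w i)) ↔ IsUnit ((red ∘ w) i * (1 - (red ∘ w) i)) := by
      intro i
      rw [← isUnit_red_iff p e hp he (w i * (1 - w i)), ← hred]
      simp only [map_mul, map_sub, map_one, Function.comp_apply]
    have hsum : red (∑ i, w i) = ∑ i, (red ∘ w) i := map_sum red _ _
    have h2 : IsUnit (((c : ZMod (p ^ e)) - ∑ i, w i) * (1 - ((c : ZMod (p ^ e)) - ∑ i, w i)))
        ↔ IsUnit (((c : ZMod p) - ∑ i, (red ∘ w) i) * (1 - ((c : ZMod p) - ∑ i, (red ∘ w) i))) := by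
      rw [← isUnit_red_iff p e hp he, ← hred]
      simp only [map_mul, map_sub, map_one, map_intCast, hsum, Function.comp_apply]
    rw [hQ]
    exact and_congr (forall_congr' h1) h2
  calc D (p ^ e) m ((c : ℤ) : ZMod (p ^ e))
      = Nat.card {w : Fin m → ZMod (p ^ e) // Q (red ∘ w)} :=
        Nat.card_congr (Equiv.subtypeEquivRight hpred)
    _ = (p ^ (e - 1)) ^ m * Nat.card {v : Fin m → ZMod p // Q v} :=
        card_comp_fiber red (p ^ (e - 1)) (card_fiber p e hp he) m Q
    _ = p ^ ((e - 1) * m) * D p m (c : ZMod p) := by rw [← pow_mul]; rfl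

lemma Ez_pow (p e k : ℕ) (hp : p.Prime) (he : e ≠ 0) (hk : k ≠ 0) (c : ℤ) :
    Ez (p ^ e) k (c : ZMod (p ^ e)) = p ^ ((e - 1) * (k - 1)) * Ez p k (c : ZMod p) := by
  obtain ⟨m, rfl⟩ : ∃ m, k = m + 1 := ⟨k - 1, (Nat.succ_pred_eq_of_pos (Nat.pos_of_ne_zero hk)).symm⟩
  rw [Ez_eq_D, Ez_eq_D, D_lift p e m hp he c]
  simp

lemma pi_isUnit {ι : Type*} {M : ι → Type*} [∀ i, CommMonoid (M i)] (x : ∀ i, M i) :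
    IsUnit x ↔ ∀ i, IsUnit (x i) := by
  constructor
  · intro h i
    exact h.map (Pi.evalMonoidHom M i)
  · intro h
    refine IsUnit.of_mul_eq_one (a := x) (fun i => ((h i).unit⁻¹ : _)) ?_
    funext i
    have := (h i).unit.mul_inv
    rwa [IsUnit.unit_spec] at this

lemma card_equiv_ring {R S : Type*} [CommRing R] [CommRing S] (φ : R ≃+* S) (k : ℕ) (c : ℤ) :
    Nat.card {y : Fin k → R // (∀ j, IsUnit (y j * (1 - y j))) ∧ ∑ j, y j = (c : R)}
      = Nat.card {z : Fin k → S // (∀ j, IsUnit (z j * (1 - z j))) ∧ ∑ j, z j = (c : S)} := by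
  have hUiff : ∀ x : R, IsUnit x ↔ IsUnit (φ x) := by
    intro x
    constructor
    · exact fun h => h.map (φ : R →+* S)
    · intro h
      have := h.map (φ.symm : S →+* R)
      simpa using this
  refine Nat.card_congr (Equiv.subtypeEquiv (Equiv.piCongrRight fun _ => φ.toEquiv) ?_)
  intro y
  have h1 : ∀ j : Fin k, (IsUnit (y j * (1 - y j)) ↔ IsUnit (φ (y j) * (1 - φ (y j)))) := by
    intro j
    rw [show φ (y j) * (1 - φ (y j)) = φ (y j * (1 - y j)) by rw [map_mul, map_sub, map_one]]
    exact hUiff _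
  have h2 : (∑ j, y j = (c : R)) ↔ (∑ j, φ (y j) = (c : S)) := by
    rw [← map_sum]
    constructor
    · intro h; rw [h, map_intCast]
    · intro h
      have := congrArg φ.symm h
      simpa using this
  exact and_congr (forall_congr' h1) h2

lemma Ez_prod {ι : Type*} [Fintype ι] (a : ι → ℕ) (hcop : Pairwise (Function.onFun Nat.Coprime a))
    (k : ℕ) (c : ℤ) :
    Ez (∏ i, a i) k ((c : ℤ) : ZMod (∏ i, a i)) = ∏ i, Ez (a i) k (c : ZMod (a i)) := by
  classical
  rw [Ez, card_equiv_ring (ZMod.prodEquivPi a hcop) k c]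
  have e2 : {z : Fin k → (∀ i, ZMod (a i)) //
        (∀ j, IsUnit (z j * (1 - z j))) ∧ ∑ j, z j = ((c : ℤ) : ∀ i, ZMod (a i))}
      ≃ ∀ i, {v : Fin k → ZMod (a i) //
        (∀ j, IsUnit (v j * (1 - v j))) ∧ ∑ j, v j = ((c : ℤ) : ZMod (a i))} := by
    refine (Equiv.subtypeEquiv (Equiv.piComm fun (j : Fin k) (i : ι) => ZMod (a i)) ?_).trans
      (Equiv.subtypePiEquivPi (p := fun i (v : Fin k → ZMod (a i)) =>
        (∀ j, IsUnit (v j * (1 - v j))) ∧ ∑ j, v j = ((c : ℤ) : ZMod (a i))))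
    intro z
    have hcomp : ∀ j : Fin k, IsUnit (z j * (1 - z j)) ↔ ∀ i, IsUnit (z j i * (1 - z j i)) := by
      intro j
      rw [pi_isUnit]
      exact Iff.rfl
    constructor
    · rintro ⟨hu, hs⟩ i
      refine ⟨fun j => (hcomp j).mp (hu j) i, ?_⟩
      have := congrFun hs i
      rw [Finset.sum_apply] at this
      simpa using this
    · intro h
      refine ⟨fun j => (hcomp j).mpr (fun i => (h i).1 j), ?_⟩
      funext i
      rw [Finset.sum_apply]
      simpa using (h i).2
  rw [Nat.card_congr e2, Nat.card_pi]
  rfl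

lemma isUnit_intCast_iff (n : ℕ) [NeZero n] (t : ℤ) :
    IsUnit ((t : ZMod n)) ↔ Int.gcd t n = 1 := by
  rw [← Int.isCoprime_iff_gcd_eq_one]
  constructor
  · intro h
    obtain ⟨u, hu⟩ := h
    set s : ZMod n := ((u⁻¹ : (ZMod n)ˣ) : ZMod n) with hs
    have hts : (t : ZMod n) * s = 1 := by rw [← hu, hs]; exact u.mul_inv
    have hsv : (((s.val : ℤ)) : ZMod n) = s := by
      push_cast
      exact ZMod.natCast_rightInverse s
    have hdvd : ((n : ℤ)) ∣ t * (s.val : ℤ) - 1 := by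
      rw [← ZMod.intCast_zmod_eq_zero_iff_dvd]
      push_cast
      rw [show ((s.val : ℕ) : ZMod n) = s from ZMod.natCast_rightInverse s, hts]
      ring
    obtain ⟨m, hm⟩ := hdvd
    exact ⟨(s.val : ℤ), -m, by linarith⟩
  · rintro ⟨u, v, huv⟩
    have : (u : ZMod n) * (t : ZMod n) = 1 := by
      have h2 := congrArg (fun z : ℤ => (z : ZMod n)) huv
      push_cast at h2
      rwa [ZMod.natCast_self, mul_zero, add_zero] at h2
    exact IsUnit.of_mul_eq_one _ (by rw [mul_comm] at this; exact this)

lemma count_int (n : ℕ) (hn : 0 < n) (k : ℕ) (c : ℤ) :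
    Nat.card {x : Fin k → ℤ //
        (∀ i, 0 ≤ x i ∧ x i < n ∧ Int.gcd (x i * (1 - x i)) n = 1) ∧
        (n : ℤ) ∣ (∑ i, x i) - c} = Ez n k (c : ZMod n) := by
  haveI : NeZero n := ⟨hn.ne'⟩
  refine Nat.card_congr ?_
  refine
    { toFun := fun x => ⟨fun i => ((x.1 i : ℤ) : ZMod n), ?_, ?_⟩
      invFun := fun y => ⟨fun i => ((y.1 i).val : ℤ), ?_, ?_⟩
      left_inv := ?_
      right_inv := ?_ }
  · intro i
    have := (x.2.1 i).2.2
    rw [← isUnit_intCast_iff n] at this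
    push_cast at this
    exact this
  · have := x.2.2
    rw [← ZMod.intCast_zmod_eq_zero_iff_dvd, Int.cast_sub] at this
    push_cast at this
    rw [sub_eq_zero] at this
    exact this
  · intro i
    refine ⟨Int.natCast_nonneg _, ?_, ?_⟩
    · show ((y.1 i).val : ℤ) < (n : ℤ)
      exact_mod_cast ZMod.val_lt (y.1 i)
    · rw [← isUnit_intCast_iff n]
      push_cast
      rw [show (((y.1 i).val : ℕ) : ZMod n) = y.1 i from ZMod.natCast_rightInverse _]
      exact y.2.1 i
  · rw [← ZMod.intCast_zmod_eq_zero_iff_dvd, Int.cast_sub]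
    push_cast
    rw [Finset.sum_congr rfl fun i _ =>
      show (((y.1 i).val : ℕ) : ZMod n) = y.1 i from ZMod.natCast_rightInverse _]
    rw [y.2.2]
    ring
  · intro x
    ext i
    show ((((x.1 i : ℤ) : ZMod n)).val : ℤ) = x.1 i
    rw [ZMod.val_intCast, Int.emod_eq_of_lt (x.2.1 i).1 (x.2.1 i).2.1]
  · intro y
    ext i
    push_cast
    exact ZMod.natCast_rightInverse _

theorem count_sum_exceptional_units (n : ℕ) (hn : 0 < n) (k : ℕ) (hk : 2 ≤ k) (c : ℤ) :
    (Nat.card {x : Fin k → ℤ //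
        (∀ i, 0 ≤ x i ∧ x i < n ∧ Int.gcd (x i * (1 - x i)) n = 1) ∧
        (n : ℤ) ∣ (∑ i, x i) - c} : ℚ) =
      (-1 : ℚ) ^ (k * n.primeFactors.card) *
        ∏ p ∈ n.primeFactors,
          (p : ℚ) ^ ((k : ℤ) * (n.factorization p) - (n.factorization p) - k) *
            ((p : ℚ) *
              (∑ j ∈ Finset.range (k + 1),
                if (p : ℤ) ∣ ((j : ℤ) - c) then (k.choose j : ℚ) else 0) +
              (2 - (p : ℚ)) ^ k - 2 ^ k) := by
  classical
  haveI : NeZero n := ⟨hn.ne'⟩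
  rw [count_int n hn k c]
  have hfac2 : n = ∏ p : n.primeFactors, (p : ℕ) ^ (n.factorization (p : ℕ)) := by
    have h0 : n.factorization.prod (fun p e => p ^ e) = n :=
      Nat.factorization_prod_pow_eq_self hn.ne'
    rw [Finsupp.prod, Nat.support_factorization] at h0
    exact h0.symm.trans (Finset.prod_coe_sort _ _).symm
  have hcop : Pairwise (Function.onFun Nat.Coprime
      fun p : n.primeFactors => (p : ℕ) ^ (n.factorization (p : ℕ))) := by
    intro p q hpq
    have hp := Nat.prime_of_mem_primeFactors p.2
    have hq := Nat.prime_of_mem_primeFactors q.2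
    have hne : (p : ℕ) ≠ (q : ℕ) := fun h => hpq (Subtype.ext h)
    exact Nat.Coprime.pow _ _ ((Nat.coprime_primes hp hq).mpr hne)
  have step1 : Ez n k ((c : ℤ) : ZMod n) = ∏ p : n.primeFactors,
      Ez ((p : ℕ) ^ (n.factorization (p : ℕ))) k
        ((c : ℤ) : ZMod ((p : ℕ) ^ (n.factorization (p : ℕ)))) := by
    conv_lhs => rw [hfac2]
    exact Ez_prod _ hcop k c
  rw [step1]
  push_cast
  have perprime : ∀ p ∈ n.primeFactors,
      ((Ez (p ^ (n.factorization p)) k ((c : ℤ) : ZMod (p ^ (n.factorization p)))) : ℚ)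
      = (-1 : ℚ) ^ k * ((p : ℚ) ^ ((k : ℤ) * (n.factorization p) - (n.factorization p) - k) *
          ((p : ℚ) * (∑ j ∈ Finset.range (k + 1),
              if (p : ℤ) ∣ ((j : ℤ) - c) then (k.choose j : ℚ) else 0) +
            (2 - (p : ℚ)) ^ k - 2 ^ k)) := by
    intro p hp
    have hpp := Nat.prime_of_mem_primeFactors hp
    have he : n.factorization p ≠ 0 :=
      (hpp.factorization_pos_of_dvd hn.ne' (Nat.dvd_of_mem_primeFactors hp)).ne'
    have hk0 : k ≠ 0 := by omega
    set e := n.factorization p with hedef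
    rw [Ez_pow p e k hpp he hk0 c]
    push_cast
    rw [Ez_prime p hpp k ((c : ℤ) : ZMod p)]
    have hS : (∑ j ∈ Finset.range (k + 1),
        if ((j : ℕ) : ZMod p) = ((c : ℤ) : ZMod p) then (k.choose j : ℚ) else 0)
        = ∑ j ∈ Finset.range (k + 1),
          if (p : ℤ) ∣ ((j : ℤ) - c) then (k.choose j : ℚ) else 0 := by
      refine Finset.sum_congr rfl fun j _ => ?_
      have : (((j : ℕ) : ZMod p) = ((c : ℤ) : ZMod p)) ↔ ((p : ℤ) ∣ ((j : ℤ) - c)) := by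
        rw [← ZMod.intCast_zmod_eq_zero_iff_dvd, Int.cast_sub, sub_eq_zero, Int.cast_natCast]
      rw [if_congr this rfl rfl]
    rw [hS]
    -- now pure algebra
    have hq : (p : ℚ) ≠ 0 := Nat.cast_ne_zero.mpr hpp.pos.ne'
    have hzE : ((k : ℤ) * e - e - k) = (((e - 1) * (k - 1) : ℕ) : ℤ) - 1 := by
      have h1 : 1 ≤ e := Nat.one_le_iff_ne_zero.mpr he
      have h2 : 1 ≤ k := by omega
      push_cast [Nat.cast_sub h1, Nat.cast_sub h2]
      ring
    rw [hzE, zpow_sub_one₀ hq, zpow_natCast]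
    set S : ℚ := ∑ j ∈ Finset.range (k + 1),
      if (p : ℤ) ∣ ((j : ℤ) - c) then (k.choose j : ℚ) else 0
    rcases Nat.even_or_odd k with hke | hko
    · rw [hke.neg_pow, hke.neg_pow, show ((2:ℚ) - p) = -((p:ℚ) - 2) by ring, hke.neg_pow]
      field_simp
      ring
    · rw [hko.neg_pow, hko.neg_pow, show ((2:ℚ) - p) = -((p:ℚ) - 2) by ring, hko.neg_pow]
      field_simp
      ring
  rw [Finset.prod_coe_sort _ (fun p => ((Ez (p ^ (n.factorization p)) k
      ((c : ℤ) : ZMod (p ^ (n.factorization p)))) : ℚ))]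
  rw [Finset.prod_congr rfl perprime, Finset.prod_mul_distrib, Finset.prod_const,
    ← pow_mul]
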